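/- Let (p*_1,…,p*_κ) be an optimal solution to the monotone price-setting subproblem (minimize ∑_{k=1}^{κ} ∑_{d∈D_k} t_d |r_d − p_k| subject to 0 ≤ p_1 ≤ … ≤ p_κ). If the prices are strictly increasing, p*_1 < p*_2 < … < p*_κ, then for every k ∈ {1,…,κ} with D_k ≠ ∅, p*_k is a weighted median of (r_d)_{d∈D_k} with weights (t_d)_{d∈D_k}. -/
import Mathlib


open scoped Classical

/-- `p` is a weighted median of the values `r d` with weights `t d` over `d ∈ D`. -/
def IsWeightedMedian {ι : Type*} (D : Finset ι) (r : ι → ℝ) (t : ι → ℕ) (p : ℝ) : Prop :=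
  (∑ d ∈ D.filter (fun d => r d < p), (t d : ℝ)) ≤ (∑ d ∈ D, (t d : ℝ)) / 2 ∧
    (∑ d ∈ D.filter (fun d => p < r d), (t d : ℝ)) ≤ (∑ d ∈ D, (t d : ℝ)) / 2

/-- Objective of the price-setting subproblem. -/
noncomputable def psObj {ι : Type*} (κ : ℕ) (Dk : Fin κ → Finset ι) (r : ι → ℝ)
    (t : ι → ℕ) (p : Fin κ → ℝ) : ℝ :=
  ∑ k : Fin κ, ∑ d ∈ Dk k, (t d : ℝ) * |r d - p k|

lemma exists_pos_le_finset (F : Finset ℝ) (hF : ∀ x ∈ F, 0 < x) :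
    ∃ ε : ℝ, 0 < ε ∧ ∀ x ∈ F, ε ≤ x := by
  have hne : (insert (1:ℝ) F).Nonempty := ⟨1, Finset.mem_insert_self 1 F⟩
  refine ⟨(insert (1:ℝ) F).min' hne, ?_, ?_⟩
  · rcases Finset.mem_insert.mp ((insert (1:ℝ) F).min'_mem hne) with h | h
    · rw [h]; norm_num
    · exact hF _ h
  · intro x hx
    exact Finset.min'_le _ _ (Finset.mem_insert_of_mem hx)

lemma shift_ineq {ι : Type*} (κ : ℕ) (Dk : Fin κ → Finset ι) (r : ι → ℝ) (t : ι → ℕ)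
    (p : Fin κ → ℝ)
    (hopt : ∀ q : Fin κ → ℝ, (∀ k, 0 ≤ q k) → Monotone q →
      psObj κ Dk r t p ≤ psObj κ Dk r t q)
    (k : Fin κ) (ε : ℝ)
    (hq0 : ∀ j, 0 ≤ Function.update p k (p k + ε) j)
    (hqm : Monotone (Function.update p k (p k + ε))) :
    0 ≤ ∑ d ∈ Dk k, (t d : ℝ) * (|r d - (p k + ε)| - |r d - p k|) := by
  have h := hopt _ hq0 hqm
  have hkey : psObj κ Dk r t (Function.update p k (p k + ε)) - psObj κ Dk r t p
      = ∑ d ∈ Dk k, (t d : ℝ) * (|r d - (p k + ε)| - |r d - p k|) := by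
    unfold psObj
    rw [← Finset.sum_sub_distrib]
    rw [Finset.sum_eq_single_of_mem k (Finset.mem_univ k)]
    · rw [← Finset.sum_sub_distrib]
      refine Finset.sum_congr rfl fun d _ => ?_
      rw [Function.update_self]
      ring
    · intro j _ hj
      rw [Function.update_of_ne hj]
      ring
  rw [← hkey]
  linarith

theorem monotone_price_setting_strict_implies_weighted_medians {ι : Type*} (κ : ℕ)
    (Dk : Fin κ → Finset ι) (r : ι → ℝ) (t : ι → ℕ)
    (hr : ∀ k, ∀ d ∈ Dk k, 0 ≤ r d) (ht : ∀ k, ∀ d ∈ Dk k, 1 ≤ t d)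
    (hdisj : ∀ k k' : Fin κ, k ≠ k' → Disjoint (Dk k) (Dk k'))
    (p : Fin κ → ℝ) (hp0 : ∀ k, 0 ≤ p k)
    (hopt : ∀ q : Fin κ → ℝ, (∀ k, 0 ≤ q k) → Monotone q →
      psObj κ Dk r t p ≤ psObj κ Dk r t q)
    (hstrict : StrictMono p) :
    ∀ k, (Dk k).Nonempty → IsWeightedMedian (Dk k) r t (p k) := by
  intro k _
  set D := Dk k with hD
  set P := p k with hP
  have htotnonneg : (0:ℝ) ≤ ∑ d ∈ D, (t d : ℝ) :=
    Finset.sum_nonneg fun d _ => by positivity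
  constructor
  · -- first condition: moving down
    by_cases hPz : P = 0
    · have hempty : D.filter (fun d => r d < P) = ∅ := by
        rw [Finset.filter_eq_empty_iff]
        intro d hd
        have := hr k d hd
        rw [hPz] at *
        push_neg
        linarith [hr k d hd]
      rw [hempty]
      simp
      linarith
    · have hPpos : 0 < P := lt_of_le_of_ne (hp0 k) (Ne.symm hPz)
      -- build ε
      set F : Finset ℝ :=
        (((Finset.univ.filter (fun j : Fin κ => j < k)).image (fun j => P - p j)) ∪
          ((D.filter (fun d => r d < P)).image (fun d => P - r d))) ∪ {P} with hF
      have hFpos : ∀ x ∈ F, 0 < x := by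
        intro x hx
        rw [hF] at hx
        rcases Finset.mem_union.mp hx with hx | hx
        · rcases Finset.mem_union.mp hx with hx | hx
          · obtain ⟨j, hj, rfl⟩ := Finset.mem_image.mp hx
            have := hstrict (Finset.mem_filter.mp hj).2
            linarith
          · obtain ⟨d, hd, rfl⟩ := Finset.mem_image.mp hx
            have := (Finset.mem_filter.mp hd).2
            linarith
        · rw [Finset.mem_singleton.mp hx]; exact hPpos
      obtain ⟨ε, hε, hεle⟩ := exists_pos_le_finset F hFpos
      have hεP : ε ≤ P := hεle P (by rw [hF]; exact Finset.mem_union_right _ (Finset.mem_singleton_self P))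
      have hεj : ∀ j : Fin κ, j < k → ε ≤ P - p j := by
        intro j hj
        exact hεle _ (by
          rw [hF]
          exact Finset.mem_union_left _ (Finset.mem_union_left _
            (Finset.mem_image.mpr ⟨j, Finset.mem_filter.mpr ⟨Finset.mem_univ j, hj⟩, rfl⟩)))
      have hεd : ∀ d ∈ D, r d < P → ε ≤ P - r d := by
        intro d hd hrd
        exact hεle _ (by
          rw [hF]
          exact Finset.mem_union_left _ (Finset.mem_union_right _
            (Finset.mem_image.mpr ⟨d, Finset.mem_filter.mpr ⟨hd, hrd⟩, rfl⟩)))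
      -- the perturbed solution
      have hq0 : ∀ j, 0 ≤ Function.update p k (p k + (-ε)) j := by
        intro j
        by_cases hj : j = k
        · rw [hj, Function.update_self, ← hP]; linarith
        · rw [Function.update_of_ne hj]; exact hp0 j
      have hqm : Monotone (Function.update p k (p k + (-ε))) := by
        intro i j hij
        by_cases hi : i = k <;> by_cases hj : j = k
        · rw [hi, hj]
        · rw [hi, Function.update_self, Function.update_of_ne hj]
          have hkj : k < j := lt_of_le_of_ne (hi ▸ hij) (fun h => hj h.symm)
          have := hstrict hkj
          rw [← hP] at this; linarith
        · rw [hj, Function.update_of_ne hi, Function.update_self]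
          have hik : i < k := lt_of_le_of_ne (hj ▸ hij) hi
          have := hεj i hik
          rw [hP] at this; linarith
        · rw [Function.update_of_ne hi, Function.update_of_ne hj]
          exact hstrict.monotone hij
      have hmain := shift_ineq κ Dk r t p hopt k (-ε) hq0 hqm
      rw [← hD, ← hP] at hmain
      -- compute the sum
      have hpt : ∀ d ∈ D, (t d : ℝ) * (|r d - (P + (-ε))| - |r d - P|)
          = (t d : ℝ) * (if r d < P then -ε else ε) := by
        intro d hd
        by_cases hc : r d < P
        · have h1 : ε ≤ P - r d := hεd d hd hc
          rw [if_pos hc, abs_of_nonpos (by linarith), abs_of_nonpos (by linarith)]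
          ring
        · push_neg at hc
          rw [if_neg (not_lt.mpr hc), abs_of_nonneg (by linarith), abs_of_nonneg (by linarith)]
          ring
      rw [Finset.sum_congr rfl hpt] at hmain
      rw [← Finset.sum_filter_add_sum_filter_not D (fun d => r d < P)] at hmain
      have hA : ∑ d ∈ D.filter (fun d => r d < P), (t d : ℝ) * (if r d < P then -ε else ε)
          = -ε * ∑ d ∈ D.filter (fun d => r d < P), (t d : ℝ) := by
        rw [Finset.mul_sum]
        refine Finset.sum_congr rfl fun d hd => ?_
        rw [if_pos (Finset.mem_filter.mp hd).2]; ring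
      have hB : ∑ d ∈ D.filter (fun d => ¬ r d < P), (t d : ℝ) * (if r d < P then -ε else ε)
          = ε * ∑ d ∈ D.filter (fun d => ¬ r d < P), (t d : ℝ) := by
        rw [Finset.mul_sum]
        refine Finset.sum_congr rfl fun d hd => ?_
        rw [if_neg (Finset.mem_filter.mp hd).2]; ring
      rw [hA, hB] at hmain
      have hsplit := Finset.sum_filter_add_sum_filter_not D (fun d => r d < P) (fun d => (t d : ℝ))
      set A := ∑ d ∈ D.filter (fun d => r d < P), (t d : ℝ)
      set B := ∑ d ∈ D.filter (fun d => ¬ r d < P), (t d : ℝ)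
      have hAB : A ≤ B := by
        by_contra hcon
        push_neg at hcon
        nlinarith
      linarith
  · -- second condition: moving up
    set F : Finset ℝ :=
      ((Finset.univ.filter (fun j : Fin κ => k < j)).image (fun j => p j - P)) ∪
        ((D.filter (fun d => P < r d)).image (fun d => r d - P)) with hF
    have hFpos : ∀ x ∈ F, 0 < x := by
      intro x hx
      rw [hF] at hx
      rcases Finset.mem_union.mp hx with hx | hx
      · obtain ⟨j, hj, rfl⟩ := Finset.mem_image.mp hx
        have := hstrict (Finset.mem_filter.mp hj).2
        linarith
      · obtain ⟨d, hd, rfl⟩ := Finset.mem_image.mp hx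
        have := (Finset.mem_filter.mp hd).2
        linarith
    obtain ⟨ε, hε, hεle⟩ := exists_pos_le_finset F hFpos
    have hεj : ∀ j : Fin κ, k < j → ε ≤ p j - P := by
      intro j hj
      exact hεle _ (by
        rw [hF]
        exact Finset.mem_union_left _
          (Finset.mem_image.mpr ⟨j, Finset.mem_filter.mpr ⟨Finset.mem_univ j, hj⟩, rfl⟩))
    have hεd : ∀ d ∈ D, P < r d → ε ≤ r d - P := by
      intro d hd hrd
      exact hεle _ (by
        rw [hF]
        exact Finset.mem_union_right _
          (Finset.mem_image.mpr ⟨d, Finset.mem_filter.mpr ⟨hd, hrd⟩, rfl⟩))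
    have hq0 : ∀ j, 0 ≤ Function.update p k (p k + ε) j := by
      intro j
      by_cases hj : j = k
      · rw [hj, Function.update_self]; linarith [hp0 k]
      · rw [Function.update_of_ne hj]; exact hp0 j
    have hqm : Monotone (Function.update p k (p k + ε)) := by
      intro i j hij
      by_cases hi : i = k <;> by_cases hj : j = k
      · rw [hi, hj]
      · rw [hi, Function.update_self, Function.update_of_ne hj]
        have hkj : k < j := lt_of_le_of_ne (hi ▸ hij) (fun h => hj h.symm)
        have := hεj j hkj
        rw [hP] at this; linarith
      · rw [hj, Function.update_of_ne hi, Function.update_self]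
        have : p i ≤ p k := hstrict.monotone (hj ▸ hij)
        linarith
      · rw [Function.update_of_ne hi, Function.update_of_ne hj]
        exact hstrict.monotone hij
    have hmain := shift_ineq κ Dk r t p hopt k ε hq0 hqm
    rw [← hD, ← hP] at hmain
    have hpt : ∀ d ∈ D, (t d : ℝ) * (|r d - (P + ε)| - |r d - P|)
        = (t d : ℝ) * (if P < r d then -ε else ε) := by
      intro d hd
      by_cases hc : P < r d
      · have h1 : ε ≤ r d - P := hεd d hd hc
        rw [if_pos hc, abs_of_nonneg (by linarith), abs_of_nonneg (by linarith)]
        ring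
      · push_neg at hc
        rw [if_neg (not_lt.mpr hc), abs_of_nonpos (by linarith), abs_of_nonpos (by linarith)]
        ring
    rw [Finset.sum_congr rfl hpt] at hmain
    rw [← Finset.sum_filter_add_sum_filter_not D (fun d => P < r d)] at hmain
    have hA : ∑ d ∈ D.filter (fun d => P < r d), (t d : ℝ) * (if P < r d then -ε else ε)
        = -ε * ∑ d ∈ D.filter (fun d => P < r d), (t d : ℝ) := by
      rw [Finset.mul_sum]
      refine Finset.sum_congr rfl fun d hd => ?_
      rw [if_pos (Finset.mem_filter.mp hd).2]; ring
    have hB : ∑ d ∈ D.filter (fun d => ¬ P < r d), (t d : ℝ) * (if P < r d then -ε else ε)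
        = ε * ∑ d ∈ D.filter (fun d => ¬ P < r d), (t d : ℝ) := by
      rw [Finset.mul_sum]
      refine Finset.sum_congr rfl fun d hd => ?_
      rw [if_neg (Finset.mem_filter.mp hd).2]; ring
    rw [hA, hB] at hmain
    have hsplit := Finset.sum_filter_add_sum_filter_not D (fun d => P < r d) (fun d => (t d : ℝ))
    set A := ∑ d ∈ D.filter (fun d => P < r d), (t d : ℝ)
    set B := ∑ d ∈ D.filter (fun d => ¬ P < r d), (t d : ℝ)
    have hAB : A ≤ B := by
      by_contra hcon
      push_neg at hcon
      nlinarith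
    linarith
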